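/- Let A ≥ 0 and B ≥ 1 be integers. If every positive integer of the form A + Bn (for integers n ≥ 0) has some iterate under T equal to 1, then every positive integer m has some iterate T^(k)(m) = 1. In other words, the truth of the 3x+1 conjecture on any single arithmetic progression {A + Bn : n ≥ 0} implies the full 3x+1 conjecture. -/

import Mathlib

/-- The 3x+1 function T(x) = (3x+1)/2 for x odd, x/2 for x even. -/
def collatzT (x : ℤ) : ℤ := if x % 2 = 0 then x / 2 else (3 * x + 1) / 2

namespace Monks

lemma T_even (y : ℤ) : collatzT (2*y) = y := by
  have h : (2*y) % 2 = 0 := by omega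
  unfold collatzT
  rw [if_pos h]
  omega

lemma T_odd (y : ℤ) : collatzT (2*y+1) = 3*y+2 := by
  have h : ¬((2*y+1) % 2 = 0) := by omega
  unfold collatzT
  rw [if_neg h]
  omega

lemma U_step {z X : ℤ} (h : 3*z = 2*X - 1) : collatzT z = X := by
  obtain ⟨w, hw⟩ : ∃ w, z = 2*w+1 := ⟨(z-1)/2, by omega⟩
  rw [hw, T_odd]
  omega

def Conn (m z : ℤ) : Prop := ∃ k l : ℕ, collatzT^[k] m = collatzT^[l] z

lemma conn_iter (m : ℤ) (j : ℕ) : Conn m (collatzT^[j] m) := ⟨j, 0, rfl⟩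

lemma conn_pull {m z z' : ℤ} (h : Conn m z) (hz : collatzT z' = z) : Conn m z' := by
  obtain ⟨k, l, hkl⟩ := h
  exact ⟨k, l+1, by rw [Function.iterate_succ_apply, hz]; exact hkl⟩

lemma conn_double {m z : ℤ} (h : Conn m z) : Conn m (2*z) := conn_pull h (T_even z)

lemma conn_pow4 {m z : ℤ} (h : Conn m z) (t : ℕ) : Conn m (4^t * z) := by
  induction t with
  | zero => simpa using h
  | succ t ih =>
      have h2 : Conn m (2*(2*(4^t*z))) := conn_double (conn_double ih)
      have : 2*(2*(4^t*z)) = 4^(t+1)*z := by ring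
      rwa [this] at h2

lemma conn_preimage {m x z : ℤ} {α : ℕ} (hx : collatzT^[α] x = z) (h : Conn m z) : Conn m x := by
  obtain ⟨k, l, hkl⟩ := h
  exact ⟨k, l+α, by rw [Function.iterate_add_apply, hx]; exact hkl⟩

-- § ModEq utilities

lemma modeq_one (a b : ℤ) : a ≡ b [ZMOD 1] := Int.modEq_iff_dvd.mpr (one_dvd _)

lemma modeq_weaken {a b : ℤ} {σ σ' : ℕ} (h : a ≡ b [ZMOD 3^σ']) (hle : σ ≤ σ') :
    a ≡ b [ZMOD 3^σ] := h.of_dvd (pow_dvd_pow 3 hle)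

lemma modeq_cancel {c n a b : ℤ} (hc : IsCoprime c n) (h : c*a ≡ c*b [ZMOD n]) :
    a ≡ b [ZMOD n] := by
  obtain ⟨u, v, huv⟩ := hc
  rw [Int.modEq_iff_dvd] at h ⊢
  have h2 : c*b - c*a = c*(b-a) := by ring
  rw [h2] at h
  have : b - a = u*(c*(b-a)) + (v*(b-a))*n := by
    have : (u*c + v*n)*(b-a) = 1*(b-a) := by rw [huv]
    linarith [this]
  rw [this]
  exact dvd_add (Dvd.dvd.mul_left h u) (Dvd.dvd.mul_left (dvd_refl n) _)

lemma modeq_cancel_three {a b : ℤ} (σ : ℕ) (h : 3*a ≡ 3*b [ZMOD 3^(σ+1)]) :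
    a ≡ b [ZMOD 3^σ] := by
  rw [Int.modEq_iff_dvd] at h ⊢
  have h3 : (3:ℤ)^(σ+1) = 3 * 3^σ := by ring
  have h2 : 3*b - 3*a = 3*(b-a) := by ring
  rw [h3, h2] at h
  exact (mul_dvd_mul_iff_left (by norm_num : (3:ℤ) ≠ 0)).mp h

lemma coprime_of_mod3_one {x : ℤ} (h : x ≡ 1 [ZMOD 3]) : IsCoprime x 3 := by
  obtain ⟨k, hk⟩ := Int.modEq_iff_dvd.mp h
  exact ⟨1, k, by linarith⟩

lemma coprime_of_mod3_two {x : ℤ} (h : x ≡ 2 [ZMOD 3]) : IsCoprime x 3 := by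
  obtain ⟨k, hk⟩ := Int.modEq_iff_dvd.mp h
  exact ⟨-1, 1-k, by linarith⟩

lemma coprime_two_three : IsCoprime (2:ℤ) 3 := coprime_of_mod3_two (Int.ModEq.refl 2)

lemma exists_inv {x n : ℤ} (h : IsCoprime x n) : ∃ y, x*y ≡ 1 [ZMOD n] := by
  obtain ⟨u, v, huv⟩ := h
  refine ⟨u, Int.modEq_iff_dvd.mpr ⟨v, by linarith⟩⟩

-- § binomial and 3-adic lemmas

lemma binom (x : ℤ) : ∀ d : ℕ, ∃ K : ℤ, (1+x)^d = 1 + d*x + x^2*K := by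
  intro d
  induction d with
  | zero => exact ⟨0, by norm_num⟩
  | succ d ih =>
      obtain ⟨K, hK⟩ := ih
      refine ⟨K + d + x*K, ?_⟩
      rw [pow_succ, hK]
      push_cast
      ring

lemma pow3 {e : ℕ} (he : 1 ≤ e) (w : ℤ) :
    ∀ k : ℕ, ∃ u : ℤ, (1 + 3^e*w)^(3^k) = 1 + 3^(e+k)*u ∧ u ≡ w [ZMOD 3] := by
  intro k
  induction k with
  | zero => exact ⟨w, by norm_num, Int.ModEq.refl w⟩
  | succ k ih =>
      obtain ⟨u, hu, humod⟩ := ih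
      obtain ⟨E, hE⟩ : ∃ E, e + k = E + 1 := ⟨e + k - 1, by omega⟩
      refine ⟨u + 3*(3^E)*u^2 + 3*((3^E)^2)*u^3, ?_, ?_⟩
      · have h1 : (3:ℕ)^(k+1) = 3^k * 3 := by ring
        rw [h1, pow_mul, hu]
        have h2 : (3:ℤ)^(e+k) = 3*3^E := by rw [hE]; ring
        have h3 : (3:ℤ)^(e+(k+1)) = 9*3^E := by
          have : e+(k+1) = E+2 := by omega
          rw [this]; ring
        rw [h2, h3]
        ring
      · have hstep : u + 3*(3^E)*u^2 + 3*((3^E)^2)*u^3 ≡ u [ZMOD 3] :=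
          Int.modEq_iff_dvd.mpr ⟨-(3^E*u^2 + (3^E)^2*u^3), by ring⟩
        exact hstep.trans humod

lemma sq_one_mod3 {w : ℤ} (hw : ¬ (3:ℤ) ∣ w) : w*w ≡ 1 [ZMOD 3] := by
  have h1 : w % 3 = 1 ∨ w % 3 = 2 := by omega
  show (w*w) % 3 = 1 % 3
  rw [Int.mul_emod]
  rcases h1 with h | h <;> rw [h] <;> norm_num

lemma cover {e : ℕ} (he : 1 ≤ e) {w : ℤ} (hw : ¬ (3:ℤ) ∣ w) :
    ∀ s : ℕ, ∀ a : ℤ, ∀ Nb : ℕ, ∃ n : ℕ, Nb ≤ n ∧ (1+3^e*w)^n ≡ 1 + 3^e*a [ZMOD 3^(e+s)] := by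
  intro s
  induction s with
  | zero =>
      intro a Nb
      refine ⟨Nb, le_rfl, ?_⟩
      have hg : (1+3^e*w) ≡ 1 [ZMOD 3^e] := Int.modEq_iff_dvd.mpr ⟨-w, by ring⟩
      have h1 : (1+3^e*w)^Nb ≡ 1 [ZMOD 3^e] := by simpa using hg.pow Nb
      have h2 : (1:ℤ) ≡ 1 + 3^e*a [ZMOD 3^e] := Int.modEq_iff_dvd.mpr ⟨a, by ring⟩
      simpa [Nat.add_zero] using h1.trans h2
  | succ s ih =>
      intro a Nb
      obtain ⟨e', rfl⟩ : ∃ e', e = e'+1 := ⟨e-1, by omega⟩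
      obtain ⟨n₀, hn₀, hmod⟩ := ih a Nb
      obtain ⟨b, hb⟩ := Int.modEq_iff_dvd.mp hmod
      obtain ⟨u, hu, humod⟩ := pow3 (by omega : 1 ≤ e'+1) w s
      obtain ⟨j, hj⟩ := Int.modEq_iff_dvd.mp humod
      have hu3 : ¬ (3:ℤ) ∣ u := by omega
      set k : ℕ := ((b*u) % 3).toNat with hk
      have hkc : (k:ℤ) = (b*u) % 3 := Int.toNat_of_nonneg (Int.emod_nonneg _ (by norm_num))
      have hkm : (k:ℤ)*u ≡ b [ZMOD 3] := by
        have h1 : (k:ℤ) ≡ b*u [ZMOD 3] := by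
          rw [hkc]; exact Int.emod_emod_of_dvd _ dvd_rfl
        calc (k:ℤ)*u ≡ (b*u)*u [ZMOD 3] := h1.mul_right u
          _ = b*(u*u) := by ring
          _ ≡ b*1 [ZMOD 3] := (sq_one_mod3 hu3).mul_left b
          _ = b := by ring
      obtain ⟨c, hc⟩ := Int.modEq_iff_dvd.mp hkm
      obtain ⟨K, hbin⟩ := binom (3^(e'+1+s)*u) k
      refine ⟨n₀ + 3^s*k, by omega, ?_⟩
      rw [Int.modEq_iff_dvd]
      refine ⟨c - 3^e'*((k:ℤ)*u*a)
        + 3^(e'+s)*((k:ℤ)*u*b - (1+3^(e'+1)*a-3^(e'+1+s)*b)*u^2*K), ?_⟩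
      have hgn : (1+3^(e'+1)*w)^(n₀ + 3^s*k)
          = (1+3^(e'+1)*w)^n₀ * ((1+3^(e'+1)*w)^(3^s))^k := by
        rw [pow_add, pow_mul]
      rw [hgn, hu, hbin]
      have hG : (1+3^(e'+1)*w)^n₀ = 1 + 3^(e'+1)*a - 3^(e'+1+s)*b := by linarith
      rw [hG]
      have hbval : b = 3*c + (k:ℤ)*u := by linarith
      rw [hbval]
      ring

-- § affine 2-adic lemma

lemma affine : ∀ (α : ℕ) (a : ℤ), ∃ (j : ℕ) (d : ℤ),
    ∀ t : ℤ, collatzT^[α] (a + 2^α * t) = d + 3^j * t := by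
  intro α
  induction α with
  | zero =>
      intro a
      exact ⟨0, a, fun t => by norm_num⟩
  | succ α ih =>
      intro a
      rcases Int.even_or_odd a with ⟨b, hb⟩ | ⟨b, hb⟩
      · obtain ⟨j, d, hjd⟩ := ih b
        refine ⟨j, d, fun t => ?_⟩
        have h1 : a + 2^(α+1)*t = 2*(b + 2^α*t) := by rw [hb]; ring
        rw [h1, Function.iterate_succ_apply, T_even]
        exact hjd t
      · obtain ⟨j, d, hjd⟩ := ih (3*b+2)
        refine ⟨j+1, d, fun t => ?_⟩
        have h1 : a + 2^(α+1)*t = 2*(b + 2^α*t) + 1 := by rw [hb]; ring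
        rw [h1, Function.iterate_succ_apply, T_odd]
        have h2 : 3*(b + 2^α*t) + 2 = (3*b+2) + 2^α*(3*t) := by ring
        rw [h2, hjd (3*t)]
        ring

-- § reaching an element ≡ 2 mod 3

lemma exists_odd_iter : ∀ n : ℕ, ∀ m : ℤ, 0 < m → m.toNat ≤ n →
    ∃ k, 0 < collatzT^[k] m ∧ Odd (collatzT^[k] m) := by
  intro n
  induction n with
  | zero => intro m hm h; omega
  | succ n ih =>
      intro m hm h
      rcases Int.even_or_odd m with ⟨b, hb⟩ | hodd
      · have hTm : collatzT m = b := by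
          have : m = 2*b := by omega
          rw [this]; exact T_even b
        obtain ⟨k, hk⟩ := ih b (by omega) (by omega)
        exact ⟨k+1, by rw [Function.iterate_succ_apply, hTm]; exact hk⟩
      · exact ⟨0, hm, hodd⟩

lemma exists_z0 (m : ℤ) (hm : 0 < m) : ∃ z₀, Conn m z₀ ∧ 1 ≤ z₀ ∧ z₀ ≡ 2 [ZMOD 3] := by
  obtain ⟨k, hk0, w, hw⟩ := exists_odd_iter (m.toNat) m hm le_rfl
  refine ⟨3*w+2, ?_, by omega, ?_⟩
  · have h1 : collatzT^[k+1] m = 3*w+2 := by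
      rw [Function.iterate_succ_apply', hw]; exact T_odd w
    rw [← h1]; exact conn_iter m (k+1)
  · exact Int.modEq_iff_dvd.mpr ⟨-w, by ring⟩

-- § cycle at 1 and merging

lemma T_iter_one : ∀ i : ℕ, collatzT^[i] 1 = 1 ∨ collatzT^[i] 1 = 2 := by
  intro i
  induction i with
  | zero => left; rfl
  | succ i ih =>
      rw [Function.iterate_succ_apply']
      have hT1 : collatzT 1 = 2 := by have := T_odd 0; norm_num at this; exact this
      have hT2 : collatzT 2 = 1 := by have := T_even 1; norm_num at this; exact this
      rcases ih with h | h <;> rw [h]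
      · right; exact hT1
      · left; exact hT2

lemma merge {m x : ℤ} (hconn : Conn m x) (hx : ∃ k, collatzT^[k] x = 1) :
    ∃ k, collatzT^[k] m = 1 := by
  obtain ⟨k, hk⟩ := hx
  obtain ⟨p, q, hpq⟩ := hconn
  rcases le_total q k with hle | hle
  · refine ⟨p + (k - q), ?_⟩
    have h1 : p + (k-q) = (k-q) + p := by omega
    rw [h1, Function.iterate_add_apply, hpq, ← Function.iterate_add_apply]
    have h2 : k - q + q = k := by omega
    rw [h2, hk]
  · have h1 : collatzT^[q] x = collatzT^[q - k + k] x := by rw [Nat.sub_add_cancel hle]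
    have h2 : collatzT^[q] x = collatzT^[q-k] 1 := by
      rw [h1, Function.iterate_add_apply, hk]
    rcases T_iter_one (q-k) with h3 | h3
    · exact ⟨p, by rw [hpq, h2, h3]⟩
    · refine ⟨p+1, ?_⟩
      have h4 : p+1 = 1+p := by omega
      have hT2 : collatzT 2 = 1 := by have := T_even 1; norm_num at this; exact this
      rw [h4, Function.iterate_add_apply, hpq, h2, h3, Function.iterate_one, hT2]

-- § families

def Fam (m Q : ℤ) (δ : ℕ) (r : ℤ) : Prop :=
  ∀ σ : ℕ, ∀ N τ : ℤ, τ ≡ -1 [ZMOD 3^δ] →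
    ∃ z : ℤ, Conn m z ∧ N < z ∧ z ≡ r [ZMOD Q] ∧ z ≡ τ [ZMOD 3^σ]

lemma fam_alpha {m Q : ℤ} (hQ3 : IsCoprime 3 Q) {δ : ℕ} {r : ℤ} (h : Fam m Q δ r)
    {r' : ℤ} (hr' : 3*r' ≡ 2*r - 1 [ZMOD Q]) : Fam m Q (δ-1) r' := by
  intro σ N τ hτ
  set σ' := σ + δ + 1 with hσ'
  obtain ⟨c2, hc2⟩ := exists_inv (coprime_two_three.pow_right (n := σ'))
  have hcbot : (1+3*τ)*c2 ≡ -1 [ZMOD 3^δ] := by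
    rcases Nat.eq_zero_or_pos δ with hδ | hδ
    · rw [hδ]; simpa using modeq_one ((1+3*τ)*c2) (-1)
    · obtain ⟨δ₀, rfl⟩ : ∃ δ₀, δ = δ₀+1 := ⟨δ-1, by omega⟩
      have hτ' : τ ≡ -1 [ZMOD 3^δ₀] := by simpa using hτ
      apply modeq_cancel (coprime_two_three.pow_right (n := δ₀+1))
      have h3 : 3*τ ≡ 3*(-1) [ZMOD 3^(δ₀+1)] := by
        have h := hτ'.mul_left' (c := 3)
        have he : (3:ℤ)*3^δ₀ = 3^(δ₀+1) := by ring
        rwa [he] at h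
      calc 2*((1+3*τ)*c2) = (1+3*τ)*(2*c2) := by ring
        _ ≡ (1+3*τ)*1 [ZMOD 3^(δ₀+1)] := (modeq_weaken hc2 (by omega)).mul_left _
        _ = 1+3*τ := by ring
        _ ≡ 1+3*(-1) [ZMOD 3^(δ₀+1)] := h3.add_left 1
        _ = 2*(-1) := by ring
  obtain ⟨z, hconn, hsize, hzQ, hz3⟩ := h σ' (3*(max N 0)+1) ((1+3*τ)*c2) hcbot
  have h2z : 2*z ≡ 1+3*τ [ZMOD 3^σ'] := by
    calc 2*z ≡ 2*((1+3*τ)*c2) [ZMOD 3^σ'] := hz3.mul_left 2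
      _ = (1+3*τ)*(2*c2) := by ring
      _ ≡ (1+3*τ)*1 [ZMOD 3^σ'] := hc2.mul_left _
      _ = 1+3*τ := by ring
  have h2zw : 2*z - 1 ≡ 3*τ [ZMOD 3^(σ+1)] := by
    have h1 := (modeq_weaken h2z (show σ+1 ≤ σ' by omega)).sub_right 1
    have h2 : (1+3*τ)-1 = 3*τ := by ring
    rwa [h2] at h1
  obtain ⟨kk, hkk⟩ := Int.modEq_iff_dvd.mp h2zw
  have h3z' : 3*(τ - 3^σ*kk) = 2*z - 1 := by linear_combination hkk
  have hTz' : collatzT (τ - 3^σ*kk) = z := U_step h3z'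
  refine ⟨τ - 3^σ*kk, conn_pull hconn hTz', ?_, ?_, ?_⟩
  · have h1 : N ≤ max N 0 := le_max_left _ _
    have h2 : (0:ℤ) ≤ max N 0 := le_max_right _ _
    omega
  · apply modeq_cancel hQ3
    calc 3*(τ-3^σ*kk) = 2*z-1 := h3z'
      _ ≡ 2*r-1 [ZMOD Q] := (hzQ.mul_left 2).sub_right 1
      _ ≡ 3*r' [ZMOD Q] := hr'.symm
  · exact Int.modEq_iff_dvd.mpr ⟨kk, by ring⟩

lemma fam_f {m Q r : ℤ} (h : Fam m Q 0 r) : Fam m Q 0 (2*r) := by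
  intro σ N τ _
  obtain ⟨c2, hc2⟩ := exists_inv (coprime_two_three.pow_right (n := σ))
  obtain ⟨z, hconn, hsize, hzQ, hz3⟩ := h σ (max N 0) (c2*τ)
    (by simpa using modeq_one (c2*τ) (-1))
  refine ⟨2*z, conn_double hconn, ?_, hzQ.mul_left 2, ?_⟩
  · have h1 : N ≤ max N 0 := le_max_left _ _
    have h2 : (0:ℤ) ≤ max N 0 := le_max_right _ _
    omega
  · calc 2*z ≡ 2*(c2*τ) [ZMOD 3^σ] := hz3.mul_left 2
      _ = (2*c2)*τ := by ring
      _ ≡ 1*τ [ZMOD 3^σ] := hc2.mul_right τ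
      _ = τ := by ring

lemma fam_cong {m Q r r' : ℤ} (h : Fam m Q 0 r) (hrr : r ≡ r' [ZMOD Q]) : Fam m Q 0 r' := by
  intro σ N τ hτ
  obtain ⟨z, hconn, hsize, hzQ, hz3⟩ := h σ N τ hτ
  exact ⟨z, hconn, hsize, hzQ.trans hrr, hz3⟩

-- § base family

lemma pow4_lb : ∀ t : ℕ, 3*(t:ℤ)+1 ≤ 4^t := by
  intro t
  induction t with
  | zero => norm_num
  | succ t ih =>
      have h4 : (0:ℤ) < 4^t := by positivity
      have : (4:ℤ)^(t+1) = 4*4^t := by ring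
      rw [this]
      push_cast
      nlinarith

lemma fam_base {m Q z₀ : ℤ} (hz₀c : Conn m z₀) (hz₀1 : 1 ≤ z₀) (hz₀3 : z₀ ≡ 2 [ZMOD 3])
    (hQ3 : IsCoprime 3 Q)
    (φ : ℕ) (hφ1 : 1 ≤ φ) (h4φ : (4:ℤ)^φ ≡ 1 [ZMOD Q])
    (ε cc : ℕ) (hφdec : φ = 3^ε * cc) (hcc : ¬ (3:ℕ) ∣ cc) :
    ∃ r₀ : ℤ, Fam m Q (ε+1) r₀ := by
  set e := ε + 1 with he
  have h2z1 : 2*z₀ ≡ 1 [ZMOD 3] := by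
    calc 2*z₀ ≡ 2*2 [ZMOD 3] := hz₀3.mul_left 2
      _ ≡ 1 [ZMOD 3] := Int.modEq_iff_dvd.mpr ⟨-1, by ring⟩
  have hcop : IsCoprime (2*z₀) 3 := coprime_of_mod3_one h2z1
  -- w₀ : 4^φ = 1 + 3^e w₀, 3∤w₀
  obtain ⟨u, hu, humod⟩ := pow3 (le_refl 1) (1:ℤ) ε
  have hu' : (4:ℤ)^(3^ε) = 1 + 3^(1+ε)*u := by
    have h441 : (1+3^1*(1:ℤ)) = 4 := by norm_num
    rwa [h441] at hu
  obtain ⟨K, hK⟩ := binom (3^(1+ε)*u) cc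
  have hw₀eq : (4:ℤ)^φ = 1 + 3^e*((cc:ℤ)*u + 3^e*u^2*K) := by
    have h1 : (4:ℤ)^φ = ((4:ℤ)^(3^ε))^cc := by rw [hφdec, pow_mul]
    rw [h1, hu', hK, he]
    ring
  set w₀ : ℤ := (cc:ℤ)*u + 3^e*u^2*K with hw₀
  have hu3 : ¬ (3:ℤ) ∣ u := by
    obtain ⟨j, hj⟩ := Int.modEq_iff_dvd.mp humod
    omega
  have hcc3 : ¬ (3:ℤ) ∣ (cc:ℤ) := fun hd => hcc (Int.natCast_dvd_natCast.mp (by exact_mod_cast hd))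
  have hw₀3 : ¬ (3:ℤ) ∣ w₀ := by
    intro hd
    have h3e : (3:ℤ) ∣ 3^e := dvd_pow_self 3 (by omega)
    have hdcu : (3:ℤ) ∣ (cc:ℤ)*u := by
      have : (cc:ℤ)*u = w₀ - 3^e*(u^2*K) := by rw [hw₀]; ring
      rw [this]
      exact dvd_sub hd (Dvd.dvd.mul_right h3e _)
    rcases (Int.prime_three.dvd_mul.mp hdcu) with h | h
    · exact hcc3 h
    · exact hu3 h
  -- t₀ choice
  obtain ⟨v, hv⟩ := exists_inv (hcop.pow_right (n := e+1))
  have hv1 : v ≡ 1 [ZMOD 3] := by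
    have h1 : 2*z₀*v ≡ 1 [ZMOD 3] := hv.of_dvd (dvd_pow_self 3 (by omega))
    calc v = 1*v := by ring
      _ ≡ (2*z₀)*v [ZMOD 3] := h2z1.symm.mul_right v
      _ ≡ 1 [ZMOD 3] := h1
  have hX1 : -2*v ≡ 1 [ZMOD 3] := by
    calc -2*v ≡ -2*1 [ZMOD 3] := hv1.mul_left (-2)
      _ ≡ 1 [ZMOD 3] := Int.modEq_iff_dvd.mpr ⟨1, by ring⟩
  obtain ⟨a₀', ha₀'⟩ := Int.modEq_iff_dvd.mp hX1
  -- 1 - (-2*v) = 3*a₀'  so -2*v = 1 + 3*(-a₀')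
  obtain ⟨t₀, -, ht₀⟩ := cover (le_refl 1) (by norm_num : ¬ (3:ℤ) ∣ 1) e (-a₀') 0
  have ht₀' : (4:ℤ)^t₀ ≡ -2*v [ZMOD 3^(e+1)] := by
    have h441 : (1+3^1*(1:ℤ)) = 4 := by norm_num
    rw [h441] at ht₀
    have h2 : 1 + 3^1*(-a₀') = -2*v := by omega
    have h3 : (1:ℕ) + e = e + 1 := by omega
    rw [h2, h3] at ht₀
    exact ht₀
  have hP : 2*4^t₀*z₀ ≡ -2 [ZMOD 3^(e+1)] := by
    calc 2*4^t₀*z₀ = (2*z₀)*(4^t₀) := by ring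
      _ ≡ (2*z₀)*(-2*v) [ZMOD 3^(e+1)] := ht₀'.mul_left _
      _ = -2*((2*z₀)*v) := by ring
      _ ≡ -2*1 [ZMOD 3^(e+1)] := hv.mul_left (-2)
      _ = -2 := by ring
  have hP1 : 2*4^t₀*z₀ ≡ 1 [ZMOD 3] := by
    have h1 : 2*4^t₀*z₀ ≡ -2 [ZMOD 3] := hP.of_dvd (dvd_pow_self 3 (by omega))
    exact h1.trans (Int.modEq_iff_dvd.mpr ⟨1, by ring⟩)
  obtain ⟨r₀, hr₀⟩ : ∃ r₀, 2*4^t₀*z₀ - 1 = 3*r₀ := by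
    obtain ⟨g, hg⟩ := Int.modEq_iff_dvd.mp hP1
    exact ⟨-g, by omega⟩
  refine ⟨r₀, ?_⟩
  intro σ N τ hτ
  set σ' := σ + e + 1 with hσ'
  obtain ⟨uP, hup⟩ := exists_inv ((coprime_of_mod3_one hP1).pow_right (n := σ'))
  have hτP : 1 + 3*τ ≡ 2*4^t₀*z₀ [ZMOD 3^(e+1)] := by
    have h3 : 3*τ ≡ 3*(-1) [ZMOD 3^(e+1)] := by
      have h := hτ.mul_left' (c := 3)
      have h3e : (3:ℤ)*3^e = 3^(e+1) := by ring
      rwa [h3e] at h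
    calc 1+3*τ ≡ 1+3*(-1) [ZMOD 3^(e+1)] := h3.add_left 1
      _ = -2 := by ring
      _ ≡ 2*4^t₀*z₀ [ZMOD 3^(e+1)] := hP.symm
  obtain ⟨D, hD⟩ := Int.modEq_iff_dvd.mp hτP
  -- hD : 2*4^t₀*z₀ - (1+3*τ) = 3^(e+1)*D
  obtain ⟨j, hjN, hj⟩ := cover (by omega : 1 ≤ e) hw₀3 (σ' - e) (-3*D*uP) (N.toNat)
  rw [← hw₀eq] at hj
  have hσe : e + (σ' - e) = σ' := by omega
  rw [hσe] at hj
  set t := t₀ + φ*j with ht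
  have hkey : 2*4^t*z₀ ≡ 1 + 3*τ [ZMOD 3^σ'] := by
    have h1 : (2:ℤ)*4^t*z₀ = (2*4^t₀*z₀)*((4^φ)^j) := by
      rw [ht]; push_cast; rw [pow_add, pow_mul]; ring
    obtain ⟨q, hq⟩ := Int.modEq_iff_dvd.mp hup
    -- hq : 1 - (2*4^t₀*z₀)*uP = 3^σ'*q
    rw [h1]
    calc (2*4^t₀*z₀)*((4^φ)^j) ≡ (2*4^t₀*z₀)*(1 + 3^e*(-3*D*uP)) [ZMOD 3^σ'] :=
          hj.mul_left _
      _ ≡ 1 + 3*τ [ZMOD 3^σ'] := by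
          rw [Int.modEq_iff_dvd]
          refine ⟨-3^(e+1)*D*q, ?_⟩
          linear_combination (-1:ℤ)*hD + (-(3:ℤ)^(e+1)*D)*hq
  have h3dvd : (3:ℤ) ∣ 1 + 3*τ - 2*4^t*z₀ := by
    have h1 := Int.modEq_iff_dvd.mp hkey
    obtain ⟨g1, hg1⟩ := h1
    have h3d : (3:ℤ) ∣ 3^σ' := dvd_pow_self 3 (by omega)
    exact Dvd.dvd.trans h3d ⟨g1, hg1⟩
  obtain ⟨zz, hzz⟩ : ∃ zz, 2*(4^t*z₀) = 3*zz + 1 := by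
    obtain ⟨g2, hg2⟩ := h3dvd
    exact ⟨τ - g2, by linear_combination -hg2⟩
  have hTz : collatzT zz = 4^t*z₀ := U_step (by linarith [hzz])
  refine ⟨zz, conn_pull (conn_pow4 hz₀c t) hTz, ?_, ?_, ?_⟩
  · -- size
    have h4t : 3*(t:ℤ)+1 ≤ 4^t := pow4_lb t
    have h4z : (4:ℤ)^t ≤ 4^t*z₀ := by
      simpa using mul_le_mul_of_nonneg_left hz₀1 (by positivity : (0:ℤ) ≤ 4^t)
    have hjt : j ≤ t := by
      rw [ht]
      calc j ≤ φ*j := Nat.le_mul_of_pos_left j hφ1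
        _ ≤ t₀ + φ*j := by omega
    have hNj : N ≤ (N.toNat:ℤ) := Int.self_le_toNat N
    have hjZ : ((N.toNat:ℕ):ℤ) ≤ (j:ℤ) := by exact_mod_cast hjN
    have htZ : (j:ℤ) ≤ (t:ℤ) := by exact_mod_cast hjt
    linarith [hzz, h4z, h4t, hNj, hjZ, htZ]
  · -- mod Q
    apply modeq_cancel hQ3
    have h1 : (4:ℤ)^φ ≡ 1 [ZMOD Q] := h4φ
    have h2 : ((4:ℤ)^φ)^j ≡ 1 [ZMOD Q] := by
      have := h1.pow j
      simpa using this
    have h3 : (2:ℤ)*4^t*z₀ = (2*4^t₀*z₀)*((4^φ)^j) := by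
      rw [ht]; push_cast; rw [pow_add, pow_mul]; ring
    calc 3*zz = 2*4^t*z₀ - 1 := by linear_combination -hzz
      _ = (2*4^t₀*z₀)*((4^φ)^j) - 1 := by rw [h3]
      _ ≡ (2*4^t₀*z₀)*1 - 1 [ZMOD Q] := (h2.mul_left _).sub_right 1
      _ = 3*r₀ := by linear_combination hr₀
  · -- mod 3^σ
    apply modeq_cancel_three
    have h1 : 3*zz ≡ 3*τ [ZMOD 3^(σ+1)] := by
      have h2 := (modeq_weaken hkey (show σ+1 ≤ σ' by omega)).sub_right 1
      have h3 : 3*zz = 2*4^t*z₀ - 1 := by linear_combination -hzz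
      have h4 : 1+3*τ-1 = 3*τ := by ring
      rw [h4] at h2
      rwa [← h3] at h2
    exact h1

-- § descent chain and universality

lemma fam_chain {m Q : ℤ} (hQ3 : IsCoprime 3 Q) {c3 : ℤ} (hc3 : 3*c3 ≡ 1 [ZMOD Q]) :
    ∀ n : ℕ, ∀ r : ℤ, Fam m Q n r → ∃ r', Fam m Q 0 r' := by
  intro n
  induction n with
  | zero => exact fun r h => ⟨r, h⟩
  | succ n ih =>
      intro r h
      have hr' : 3*((2*r-1)*c3) ≡ 2*r-1 [ZMOD Q] := by
        calc 3*((2*r-1)*c3) = (3*c3)*(2*r-1) := by ring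
          _ ≡ 1*(2*r-1) [ZMOD Q] := hc3.mul_right _
          _ = 2*r-1 := by ring
      have h3 : Fam m Q n ((2*r-1)*c3) := by simpa using fam_alpha hQ3 h hr'
      exact ih _ h3

lemma fam_univ {m Q : ℤ} (hQ1 : 1 ≤ Q) (hQ2 : IsCoprime 2 Q) (hQ3 : IsCoprime 3 Q)
    (φ : ℕ) (hφ1 : 1 ≤ φ) (h2φ : (2:ℤ)^φ ≡ 1 [ZMOD Q]) (h3φ : (3:ℤ)^φ ≡ 1 [ZMOD Q])
    {r₀ : ℤ} (h0 : Fam m Q 0 r₀) : ∀ d : ℤ, Fam m Q 0 d := by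
  obtain ⟨c2, hc2⟩ := exists_inv hQ2
  obtain ⟨c3, hc3⟩ := exists_inv hQ3
  obtain ⟨kq, hkq⟩ := Int.modEq_iff_dvd.mp hc3
  have hcopc3 : IsCoprime c3 Q := ⟨3, kq, by linear_combination -hkq⟩
  have hcop2c3 : IsCoprime (2*c3) Q := IsCoprime.mul_left hQ2 hcopc3
  have pow2 : ∀ n : ℕ, ∀ r : ℤ, Fam m Q 0 r → Fam m Q 0 (2^n*r) := by
    intro n
    induction n with
    | zero =>
        intro r h
        exact fam_cong h (by rw [pow_zero, one_mul])
    | succ n ihn =>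
        intro r h
        have h1 := fam_f (ihn r h)
        apply fam_cong h1
        have heq : 2*(2^n*r) = 2^(n+1)*r := by ring
        rw [heq]
  have half : ∀ r : ℤ, Fam m Q 0 r → Fam m Q 0 (c2*r) := by
    intro r h
    obtain ⟨φ', hφ'⟩ : ∃ φ', φ = φ'+1 := ⟨φ-1, by omega⟩
    apply fam_cong (pow2 φ' r h)
    apply modeq_cancel hQ2
    calc 2*(2^φ'*r) = 2^φ*r := by rw [hφ']; ring
      _ ≡ 1*r [ZMOD Q] := h2φ.mul_right r
      _ ≡ (2*c2)*r [ZMOD Q] := hc2.symm.mul_right r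
      _ = 2*(c2*r) := by ring
  have stepA : ∀ r : ℤ, Fam m Q 0 r → Fam m Q 0 ((2*r-1)*c3) := by
    intro r h
    have hr' : 3*((2*r-1)*c3) ≡ 2*r-1 [ZMOD Q] := by
      calc 3*((2*r-1)*c3) = (3*c3)*(2*r-1) := by ring
        _ ≡ 1*(2*r-1) [ZMOD Q] := hc3.mul_right _
        _ = 2*r-1 := by ring
    simpa using fam_alpha hQ3 h hr'
  have iterA : ∀ n : ℕ, ∀ r : ℤ, Fam m Q 0 r →
      Fam m Q 0 ((fun x : ℤ => (2*x-1)*c3)^[n] r) := by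
    intro n
    induction n with
    | zero => intro r h; exact h
    | succ n ihn =>
        intro r h
        rw [Function.iterate_succ_apply']
        exact stepA _ (ihn r h)
  have Aform : ∀ n : ℕ, ∀ r : ℤ,
      (fun x : ℤ => (2*x-1)*c3)^[n] r ≡ (2*c3)^n*(r+1) - 1 [ZMOD Q] := by
    intro n
    induction n with
    | zero =>
        intro r
        have heq : ((2*c3):ℤ)^0*(r+1) - 1 = r := by ring
        rw [Function.iterate_zero_apply, heq]
    | succ n ihn =>
        intro r
        rw [Function.iterate_succ_apply']
        calc (2*((fun x : ℤ => (2*x-1)*c3)^[n] r)-1)*c3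
            ≡ (2*((2*c3)^n*(r+1)-1)-1)*c3 [ZMOD Q] :=
              (((ihn r).mul_left 2).sub_right 1).mul_right c3
          _ = (2*c3)*((2*c3)^n*(r+1)) - 3*c3 := by ring
          _ ≡ (2*c3)*((2*c3)^n*(r+1)) - 1 [ZMOD Q] := (Int.ModEq.refl _).sub hc3
          _ = (2*c3)^(n+1)*(r+1) - 1 := by ring
  have hac : (2*c3)^φ ≡ 1 [ZMOD Q] := by
    have h1 : ((2*c3)*3)^φ ≡ 1 [ZMOD Q] := by
      calc ((2*c3)*3)^φ ≡ 2^φ [ZMOD Q] := by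
            refine Int.ModEq.pow φ ?_
            calc (2*c3)*3 = 2*(3*c3) := by ring
              _ ≡ 2*1 [ZMOD Q] := hc3.mul_left 2
              _ = 2 := by ring
        _ ≡ 1 [ZMOD Q] := h2φ
    have h3 : (2*c3)^φ*(3:ℤ)^φ ≡ 1 [ZMOD Q] := by rw [← mul_pow]; exact h1
    calc (2*c3)^φ = (2*c3)^φ*1 := by ring
      _ ≡ (2*c3)^φ*3^φ [ZMOD Q] := h3φ.symm.mul_left _
      _ ≡ 1 [ZMOD Q] := h3
  have unA : ∀ r : ℤ, Fam m Q 0 r → Fam m Q 0 ((3*r+1)*c2) := by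
    intro r h
    obtain ⟨φ', hφ'⟩ : ∃ φ', φ = φ'+1 := ⟨φ-1, by omega⟩
    apply fam_cong (iterA φ' r h)
    have hL : (2*c3)*((fun x : ℤ => (2*x-1)*c3)^[φ'] r) ≡ r + c3 [ZMOD Q] := by
      calc (2*c3)*((fun x : ℤ => (2*x-1)*c3)^[φ'] r)
          ≡ (2*c3)*((2*c3)^φ'*(r+1)-1) [ZMOD Q] := (Aform φ' r).mul_left _
        _ = (2*c3)^φ*(r+1) - 2*c3 := by rw [hφ']; ring
        _ ≡ 1*(r+1) - 2*c3 [ZMOD Q] := (hac.mul_right _).sub_right _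
        _ = (r - 2*c3) + 1 := by ring
        _ ≡ (r - 2*c3) + 3*c3 [ZMOD Q] := hc3.symm.add_left _
        _ = r + c3 := by ring
    have hR : (2*c3)*((3*r+1)*c2) ≡ r + c3 [ZMOD Q] := by
      calc (2*c3)*((3*r+1)*c2) = (2*c2)*((3*r+1)*c3) := by ring
        _ ≡ 1*((3*r+1)*c3) [ZMOD Q] := hc2.mul_right _
        _ = (3*c3)*r + c3 := by ring
        _ ≡ 1*r + c3 [ZMOD Q] := (hc3.mul_right r).add_right c3
        _ = r + c3 := by ring
    exact modeq_cancel hcop2c3 (hL.trans hR.symm)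
  have trans1 : ∀ r : ℤ, Fam m Q 0 r → Fam m Q 0 (r + c3) := by
    intro r h
    have h4 := stepA _ (fam_f (unA _ (half r h)))
    apply fam_cong h4
    calc (2*(2*((3*(c2*r)+1)*c2))-1)*c3 = ((2*c2)*(2*(3*(c2*r)+1))-1)*c3 := by ring
      _ ≡ (1*(2*(3*(c2*r)+1))-1)*c3 [ZMOD Q] := ((hc2.mul_right _).sub_right 1).mul_right c3
      _ = ((2*c2)*(3*r)+1)*c3 := by ring
      _ ≡ (1*(3*r)+1)*c3 [ZMOD Q] := ((hc2.mul_right _).add_right 1).mul_right c3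
      _ = (3*c3)*r + c3 := by ring
      _ ≡ 1*r + c3 [ZMOD Q] := (hc3.mul_right r).add_right c3
      _ = r + c3 := by ring
  have transn : ∀ n : ℕ, ∀ r : ℤ, Fam m Q 0 r → Fam m Q 0 (r + n*c3) := by
    intro n
    induction n with
    | zero =>
        intro r h
        exact fam_cong h (by push_cast; rw [show r + 0*c3 = r from by ring])
    | succ n ihn =>
        intro r h
        apply fam_cong (trans1 _ (ihn r h))
        have heq : (r + (n:ℤ)*c3) + c3 = r + (((n+1:ℕ)):ℤ)*c3 := by push_cast; ring
        rw [heq]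
  intro d
  set k := (3*(d - r₀)) % Q with hk
  have hk0 : 0 ≤ k := Int.emod_nonneg _ (by omega)
  have hkc : (k.toNat : ℤ) = k := Int.toNat_of_nonneg hk0
  apply fam_cong (transn k.toNat r₀ h0)
  have hkm : k ≡ 3*(d-r₀) [ZMOD Q] := Int.emod_emod_of_dvd _ dvd_rfl
  calc r₀ + (k.toNat:ℤ)*c3 = r₀ + k*c3 := by rw [hkc]
    _ ≡ r₀ + (3*(d-r₀))*c3 [ZMOD Q] := (hkm.mul_right c3).add_left r₀
    _ = r₀ + (3*c3)*(d-r₀) := by ring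
    _ ≡ r₀ + 1*(d-r₀) [ZMOD Q] := ((hc3.mul_right _)).add_left r₀
    _ = d := by ring

-- § casting helpers

lemma int_coprime_of_nat {a Qn : ℕ} (h : Nat.Coprime a Qn) : IsCoprime (a:ℤ) (Qn:ℤ) := by
  rw [Int.isCoprime_iff_gcd_eq_one, Int.gcd_natCast_natCast]
  exact h

lemma euler_cast {x Qn φ : ℕ} (h : x^φ ≡ 1 [MOD Qn]) : ((x:ℤ))^φ ≡ 1 [ZMOD (Qn:ℤ)] := by
  have h2 : (((x^φ % Qn : ℕ)):ℤ) = ((1 % Qn : ℕ):ℤ) := congrArg (fun t : ℕ => (t:ℤ)) h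
  show ((x:ℤ))^φ % (Qn:ℤ) = 1 % (Qn:ℤ)
  push_cast at h2
  exact h2

end Monks

/-- (K. M. Monks, 2006) If the 3x+1 conjecture holds on the arithmetic progression
{A + Bn : n ≥ 0} (A ≥ 0, B ≥ 1), then it holds for all positive integers. -/
theorem monks_arith_progression_sufficiency (A B : ℤ) (hA : 0 ≤ A) (hB : 1 ≤ B)
    (hprog : ∀ n : ℕ, 0 < A + B * n → ∃ k : ℕ, collatzT^[k] (A + B * n) = 1) :
    ∀ m : ℤ, 0 < m → ∃ k : ℕ, collatzT^[k] m = 1 := by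
  intro m hm
  -- decompose B
  set Bn := B.toNat with hBn
  have hBnB : (Bn:ℤ) = B := Int.toNat_of_nonneg (by omega)
  have hBn0 : Bn ≠ 0 := by omega
  obtain ⟨α, Mn, hModd, hMn⟩ := Nat.exists_eq_two_pow_mul_odd hBn0
  have hMn0 : Mn ≠ 0 := by
    rintro rfl
    simp at hModd
  obtain ⟨s, Qn, hQn3, hMdec⟩ := Nat.exists_eq_pow_mul_and_not_dvd hMn0 3 (by norm_num)
  have hQodd : Odd Qn := by
    rcases Nat.even_or_odd Qn with hE | hO
    · exfalso
      rw [hMdec] at hModd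
      exact (Nat.not_odd_iff_even.mpr (Nat.even_mul.mpr (Or.inr hE))) hModd
    · exact hO
  have hQn0 : Qn ≠ 0 := by
    rintro rfl
    simp [Nat.odd_iff] at hQodd
  set Q : ℤ := (Qn:ℤ) with hQdef
  have hQ1 : 1 ≤ Q := by
    have h : 1 ≤ Qn := Nat.one_le_iff_ne_zero.mpr hQn0
    rw [hQdef]
    exact_mod_cast h
  -- coprimality
  have hQn2 : ¬ 2 ∣ Qn := by
    have := Nat.odd_iff.mp hQodd
    omega
  have h2Qn : Nat.Coprime 2 Qn := (Nat.prime_two.coprime_iff_not_dvd).mpr hQn2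
  have h3Qn : Nat.Coprime 3 Qn := (Nat.prime_three.coprime_iff_not_dvd).mpr hQn3
  have h4Qn : Nat.Coprime 4 Qn := by
    have := Nat.Coprime.pow_left 2 h2Qn
    norm_num at this
    exact this
  have hQ2 : IsCoprime (2:ℤ) Q := by
    have := Monks.int_coprime_of_nat h2Qn
    rw [hQdef]
    exact_mod_cast this
  have hQ3 : IsCoprime (3:ℤ) Q := by
    have := Monks.int_coprime_of_nat h3Qn
    rw [hQdef]
    exact_mod_cast this
  -- Euler
  set φ := Qn.totient with hφdef
  have hφ1 : 1 ≤ φ := Nat.totient_pos.mpr (Nat.pos_of_ne_zero hQn0)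
  have h2φ : (2:ℤ)^φ ≡ 1 [ZMOD Q] := by
    have := Monks.euler_cast (Nat.ModEq.pow_totient h2Qn)
    rw [hQdef, hφdef]
    exact_mod_cast this
  have h3φ : (3:ℤ)^φ ≡ 1 [ZMOD Q] := by
    have := Monks.euler_cast (Nat.ModEq.pow_totient h3Qn)
    rw [hQdef, hφdef]
    exact_mod_cast this
  have h4φ : (4:ℤ)^φ ≡ 1 [ZMOD Q] := by
    have := Monks.euler_cast (Nat.ModEq.pow_totient h4Qn)
    rw [hQdef, hφdef]
    exact_mod_cast this
  obtain ⟨ε, cc, hcc, hφdec⟩ := Nat.exists_eq_pow_mul_and_not_dvd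
    (show φ ≠ 0 by omega) 3 (by norm_num)
  -- z₀
  obtain ⟨z₀, hz₀c, hz₀1, hz₀3⟩ := Monks.exists_z0 m hm
  -- base family and descent
  obtain ⟨r₀, hbase⟩ := Monks.fam_base hz₀c hz₀1 hz₀3 hQ3 φ hφ1 h4φ ε cc hφdec hcc
  obtain ⟨c3, hc3⟩ := Monks.exists_inv hQ3
  obtain ⟨r₁, h0⟩ := Monks.fam_chain hQ3 hc3 (ε+1) r₀ hbase
  have huniv := Monks.fam_univ hQ1 hQ2 hQ3 φ hφ1 h2φ h3φ h0
  -- affine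
  obtain ⟨j, d, haff⟩ := Monks.affine α A
  obtain ⟨z, hconn, hsize, hzQ, hz3⟩ := huniv d (j+s) d d
    (by simpa using Monks.modeq_one d (-1))
  -- z ≡ d mod 3^(j+s) and mod Q, z > d
  have hdvd1 : (3:ℤ)^(j+s) ∣ z - d := by
    obtain ⟨g, hg⟩ := Int.modEq_iff_dvd.mp hz3
    exact ⟨-g, by linarith⟩
  have hdvd2 : Q ∣ z - d := by
    obtain ⟨g, hg⟩ := Int.modEq_iff_dvd.mp hzQ
    exact ⟨-g, by linarith⟩
  have hcoppow : IsCoprime ((3:ℤ)^(j+s)) Q := IsCoprime.pow_left hQ3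
  obtain ⟨u', hu'⟩ := IsCoprime.mul_dvd hcoppow hdvd1 hdvd2
  have hpos : (0:ℤ) < 3^(j+s)*Q := mul_pos (by positivity) (by omega)
  have hu'pos : 0 < u' := by
    by_contra hcon
    push_neg at hcon
    have h1 : 3^(j+s)*Q*u' ≤ 0 := mul_nonpos_of_nonneg_of_nonpos (le_of_lt hpos) hcon
    have h2 : 0 < z - d := by omega
    rw [← hu'] at h1
    omega
  -- construct x
  set x := A + 2^α*(3^s*Q*u') with hxdef
  have hTx : collatzT^[α] x = z := by
    rw [hxdef, haff (3^s*Q*u')]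
    linear_combination -hu'
  have hconnx : Monks.Conn m x := Monks.conn_preimage hTx hconn
  have hBfac : B = 2^α*(3^s*Q) := by
    rw [← hBnB, hMn, hMdec, hQdef]
    push_cast
    ring
  have hxB : x = A + B*u' := by rw [hxdef, hBfac]; ring
  set n : ℕ := u'.toNat with hndef
  have hn : ((n:ℕ):ℤ) = u' := Int.toNat_of_nonneg (by omega)
  have hBu : 0 < B*u' := mul_pos (by omega) hu'pos
  have hx_pos : 0 < A + B*(n:ℤ) := by rw [hn]; omega
  obtain ⟨k, hk⟩ := hprog n hx_pos
  rw [hn, ← hxB] at hk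
  exact Monks.merge hconnx ⟨k, hk⟩
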